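/- Let q = p^r, G = (ℤ_p)^r acting diagonally on edges of K_{q,q} (shores indexed by G). Then the number of connected G-invariant subgraphs of K_{q,q} that are unions of exactly r+1 edge orbits is q·(q - p⁰)(q - p¹)⋯(q - p^{r-1}) / (r+1)!. -/

import Mathlib

/-- The bipartite graph on `G ⊕ G` whose edges are the elements of an
edge set `E ⊆ G × G`. -/
def bipGraph {G : Type*} (E : Set (G × G)) : SimpleGraph (G ⊕ G) where
  Adj v w := (∃ a b, (a, b) ∈ E ∧ v = Sum.inl a ∧ w = Sum.inr b) ∨
             (∃ a b, (a, b) ∈ E ∧ w = Sum.inl a ∧ v = Sum.inr b)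
  symm := ⟨fun v w h => h.elim (fun h => Or.inr h) (fun h => Or.inl h)⟩
  loopless := ⟨by rintro v (⟨a, b, _, rfl, h⟩ | ⟨a, b, _, rfl, h⟩) <;> simp at h⟩

/-- The `G`-orbit of the edge `e` under the diagonal action `g • (a,b) = (g+a, g+b)`. -/
def edgeOrbit {G : Type*} [Add G] (e : G × G) : Set (G × G) :=
  Set.range fun g : G => (g + e.1, g + e.2)

section Helpers

open Function Set

variable {V : Type*} [AddCommGroup V]

/-- The invariant edge set determined by a set of differences. -/
def diffEdges (D : Set V) : Set (V × V) := {e | e.2 - e.1 ∈ D}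

/-- The difference set of an edge set. -/
def diffSet (E : Set (V × V)) : Set V := {d | (0, d) ∈ E}

lemma adj_diffEdges {D : Set V} {a b : V} (h : b - a ∈ D) :
    (bipGraph (diffEdges D)).Adj (Sum.inl a) (Sum.inr b) :=
  Or.inl ⟨a, b, h, rfl, rfl⟩

lemma diffEdges_invariant (D : Set V) :
    ∀ e ∈ diffEdges D, ∀ g : V, (g + e.1, g + e.2) ∈ diffEdges D := by
  rintro ⟨a, b⟩ he g
  show g + b - (g + a) ∈ D
  simpa [add_sub_add_left_eq_sub, diffEdges] using he

lemma diffEdges_diffSet {E : Set (V × V)}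
    (hE : ∀ e ∈ E, ∀ g : V, (g + e.1, g + e.2) ∈ E) :
    diffEdges (diffSet E) = E := by
  ext ⟨a, b⟩
  constructor
  · intro h
    have := hE _ h a
    simpa [add_sub_cancel] using this
  · intro h
    have := hE _ h (-a)
    show (0, b - a) ∈ E
    simpa [neg_add_eq_sub] using this

lemma diffSet_diffEdges (D : Set V) : diffSet (diffEdges D) = D := by
  ext d; simp [diffSet, diffEdges]

lemma edgeOrbit_eq (a b : V) : edgeOrbit (a, b) = edgeOrbit (0, b - a) := by
  ext ⟨x, y⟩
  simp only [edgeOrbit, Set.mem_range, Prod.mk.injEq]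
  constructor
  · rintro ⟨g, hg1, hg2⟩
    exact ⟨g + a, by rw [← hg1]; abel, by rw [← hg2]; abel⟩
  · rintro ⟨g, hg1, hg2⟩
    exact ⟨g - a, by rw [← hg1]; abel, by rw [← hg2]; abel⟩

lemma card_orbits (E : Set (V × V))
    (hE : ∀ e ∈ E, ∀ g : V, (g + e.1, g + e.2) ∈ E) :
    Nat.card {O : Set (V × V) // ∃ e ∈ E, O = edgeOrbit e} = Nat.card (diffSet E) := by
  refine (Nat.card_congr (Equiv.ofBijective
    (fun d : diffSet E => (⟨edgeOrbit (0, d.1), ⟨(0, d.1), d.2, rfl⟩⟩ :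
      {O : Set (V × V) // ∃ e ∈ E, O = edgeOrbit e})) ⟨?_, ?_⟩)).symm
  · rintro ⟨d, hd⟩ ⟨d', hd'⟩ h
    have h' : edgeOrbit ((0 : V), d) = edgeOrbit (0, d') := congrArg Subtype.val h
    have hmem : ((0 : V), d) ∈ edgeOrbit ((0 : V), d') := by
      rw [← h']; exact ⟨0, by simp [edgeOrbit]⟩
    obtain ⟨g, hg⟩ := hmem
    simp only [Prod.mk.injEq] at hg
    have hg0 : g = 0 := by simpa using hg.1
    refine Subtype.ext ?_
    show d = d'
    rw [← hg.2, hg0, zero_add]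
  · rintro ⟨O, ⟨a, b⟩, he, rfl⟩
    have hd : b - a ∈ diffSet E := by
      have := hE _ he (-a)
      show (0, b - a) ∈ E
      simpa [neg_add_eq_sub] using this
    exact ⟨⟨b - a, hd⟩, Subtype.ext (edgeOrbit_eq a b).symm⟩

variable (p : ℕ) [Module (ZMod p) V]

lemma span_of_conn {D : Set V} (hconn : (bipGraph (diffEdges D)).Connected)
    {d₀ : V} (hd₀ : d₀ ∈ D) :
    Submodule.span (ZMod p) ((fun d => d - d₀) '' D) = ⊤ := by
  set W := Submodule.span (ZMod p) ((fun d => d - d₀) '' D) with hW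
  let φ : V ⊕ V → V ⧸ W :=
    Sum.elim (fun a => Submodule.Quotient.mk a) (fun b => Submodule.Quotient.mk (b - d₀))
  have key : ∀ v w, (bipGraph (diffEdges D)).Adj v w → φ v = φ w := by
    rintro v w (⟨a, b, hab, rfl, rfl⟩ | ⟨a, b, hab, rfl, rfl⟩)
    · show Submodule.Quotient.mk a = Submodule.Quotient.mk (b - d₀)
      rw [Submodule.Quotient.eq]
      have : b - a - d₀ ∈ W := Submodule.subset_span ⟨b - a, hab, rfl⟩
      have := W.neg_mem this
      simpa [neg_sub, sub_sub_eq_add_sub, show -(b - a - d₀) = a - (b - d₀) by abel] using this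
    · show Submodule.Quotient.mk (b - d₀) = Submodule.Quotient.mk a
      rw [Submodule.Quotient.eq]
      have : b - a - d₀ ∈ W := Submodule.subset_span ⟨b - a, hab, rfl⟩
      simpa [show b - d₀ - a = b - a - d₀ by abel] using this
  have reach : ∀ v w, (bipGraph (diffEdges D)).Reachable v w → φ v = φ w := by
    intro v w hvw
    obtain ⟨walk⟩ := hvw
    induction walk with
    | nil => rfl
    | cons h _ ih => exact (key _ _ h).trans ih
  rw [eq_top_iff]
  intro x _
  have hx := reach (Sum.inl x) (Sum.inl 0) (hconn.preconnected _ _)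
  have : Submodule.Quotient.mk (p := W) x = Submodule.Quotient.mk 0 := hx
  rw [Submodule.Quotient.eq] at this
  simpa using this

lemma conn_of_span {D : Set V} {d₀ : V} (hd₀ : d₀ ∈ D)
    (hspan : Submodule.span (ZMod p) ((fun d => d - d₀) '' D) = ⊤) :
    (bipGraph (diffEdges D)).Connected := by
  set S : Set V := (fun d => d - d₀) '' D with hS
  set G := bipGraph (diffEdges D) with hG
  have adj : ∀ (a d : V), d ∈ D → G.Adj (Sum.inl a) (Sum.inr (a + d)) := by
    intro a d hd
    exact adj_diffEdges (by simpa [add_sub_cancel_left] using hd)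
  have hop : ∀ (a x : V), x ∈ S → G.Reachable (Sum.inl a) (Sum.inl (a + x)) := by
    rintro a x ⟨d, hd, rfl⟩
    have h1 : G.Adj (Sum.inl a) (Sum.inr (a + d)) := adj a d hd
    have h2 : G.Adj (Sum.inl (a + (d - d₀))) (Sum.inr (a + d)) := by
      refine adj_diffEdges ?_
      have : a + d - (a + (d - d₀)) = d₀ := by abel
      rw [this]; exact hd₀
    exact h1.reachable.trans h2.reachable.symm
  have main : ∀ x, x ∈ AddSubgroup.closure S →
      ∀ a, G.Reachable (Sum.inl a) (Sum.inl (a + x)) := by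
    intro x hx
    refine AddSubgroup.closure_induction
      (p := fun x _ => ∀ a, G.Reachable (Sum.inl a) (Sum.inl (a + x)))
      (fun x hxS a => hop a x hxS)
      (fun a => by rw [add_zero])
      (fun x y _ _ ihx ihy a => ((ihx a).trans (by
        have := ihy (a + x)
        rwa [add_assoc] at this)))
      (fun x _ ih a => by
        have := (ih (a + -x)).symm
        rwa [add_assoc, neg_add_cancel, add_zero] at this) hx
  have htop : AddSubgroup.closure S = ⊤ := by
    have h2 : Submodule.span (ZMod p) S ≤
        AddSubgroup.toZModSubmodule p (AddSubgroup.closure S) :=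
      Submodule.span_le.2 fun x hx => AddSubgroup.subset_closure hx
    rw [hspan] at h2
    refine (AddSubgroup.eq_top_iff' _).2 fun x => ?_
    exact (AddSubgroup.mem_toZModSubmodule p).1 (h2 trivial)
  have r0 : ∀ v, G.Reachable (Sum.inl 0) v := by
    intro v
    cases v with
    | inl x =>
      have := main x (htop ▸ AddSubgroup.mem_top x) 0
      simpa using this
    | inr b =>
      have h1 : G.Reachable (Sum.inl 0) (Sum.inl (b - d₀)) := by
        have := main (b - d₀) (htop ▸ AddSubgroup.mem_top _) 0
        simpa using this
      have h2 : G.Adj (Sum.inl (b - d₀)) (Sum.inr b) :=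
        adj_diffEdges (by simpa [sub_sub_cancel] using hd₀)
      exact h1.trans h2.reachable
  rw [SimpleGraph.connected_iff]
  exact ⟨fun u v => (r0 u).symm.trans (r0 v), ⟨Sum.inl 0⟩⟩

end Helpers

section Counting

open Function Set

/-- Counting subsets of given size with property `P` versus injective tuples. -/
lemma card_sets_mul_factorial {V : Type*} [Finite V] (P : Set V → Prop) (n : ℕ) :
    Nat.card {D : Set V // Nat.card D = n ∧ P D} * n.factorial =
      Nat.card {t : Fin n → V // Function.Injective t ∧ P (Set.range t)} := by
  classical
  have : Fintype V := Fintype.ofFinite V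
  have hrange : ∀ (D : {D : Set V // Nat.card D = n ∧ P D}) (e : Fin n ≃ D.1),
      Set.range (fun i => (e i : V)) = D.1 := by
    intro D e
    ext v
    constructor
    · rintro ⟨i, rfl⟩; exact (e i).2
    · intro hv; exact ⟨e.symm ⟨v, hv⟩, by simp⟩
  let Φ : (Σ D : {D : Set V // Nat.card D = n ∧ P D}, (Fin n ≃ D.1)) →
      {t : Fin n → V // Function.Injective t ∧ P (Set.range t)} :=
    fun x => ⟨fun i => (x.2 i : V), Subtype.val_injective.comp x.2.injective, by
      rw [hrange x.1 x.2]; exact x.1.2.2⟩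
  have hbij : Function.Bijective Φ := by
    constructor
    · rintro ⟨⟨D, hD⟩, e⟩ ⟨⟨D', hD'⟩, e'⟩ h
      have hval : (fun i => (e i : V)) = fun i => (e' i : V) := congrArg Subtype.val h
      have hDD : D = D' := by
        have h1 : Set.range (fun i => ((e i : V))) = D := hrange ⟨D, hD⟩ e
        have h2 : Set.range (fun i => ((e' i : V))) = D' := hrange ⟨D', hD'⟩ e'
        rw [← h1, ← h2, hval]
      subst hDD
      have he : e = e' := by
        ext i
        exact congrFun hval i
      subst he
      rfl
    · rintro ⟨t, ht, hP⟩
      refine ⟨⟨⟨Set.range t, ?_, hP⟩, Equiv.ofInjective t ht⟩, Subtype.ext rfl⟩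
      rw [← Nat.card_congr (Equiv.ofInjective t ht), Nat.card_eq_fintype_card,
        Fintype.card_fin]
  rw [← Nat.card_congr (Equiv.ofBijective Φ hbij)]
  have hsig : Nat.card ((D : {D : Set V // Nat.card D = n ∧ P D}) × (Fin n ≃ D.1)) =
      ∑ D : {D : Set V // Nat.card D = n ∧ P D}, Fintype.card (Fin n ≃ D.1) := by
    rw [Nat.card_eq_fintype_card, Fintype.card_sigma]
  rw [hsig]
  have hfib : ∀ D : {D : Set V // Nat.card D = n ∧ P D},
      Fintype.card (Fin n ≃ D.1) = n.factorial := by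
    intro D
    have hc : Fintype.card D.1 = n := by
      rw [← Nat.card_eq_fintype_card]; exact D.2.1
    rw [Fintype.card_equiv (Fintype.equivFinOfCardEq hc).symm, Fintype.card_fin]
  rw [Finset.sum_congr rfl fun D _ => hfib D, Finset.sum_const, Finset.card_univ,
    smul_eq_mul, ← Nat.card_eq_fintype_card]

end Counting

section TupleEquiv

open Function Set

variable (p r : ℕ) [Fact p.Prime]

local notation "V" => Fin r → ZMod p

lemma finrank_V : Module.finrank (ZMod p) (Fin r → ZMod p) = r := by
  rw [Module.finrank_fintype_fun_eq_card, Fintype.card_fin]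

/-- Tuples of `r+1` points whose difference graph is connected, versus a base
point together with a linearly independent `r`-tuple. -/
noncomputable def tupleEquiv :
    {t : Fin (r+1) → (Fin r → ZMod p) // Function.Injective t ∧
      (bipGraph (diffEdges (Set.range t))).Connected} ≃
    (Fin r → ZMod p) × {s : Fin r → (Fin r → ZMod p) // LinearIndependent (ZMod p) s} where
  toFun t := ⟨t.1 0, ⟨fun i => t.1 i.succ - t.1 0, by
    have hspan := span_of_conn p t.2.2 (Set.mem_range_self 0)
    have himg : (fun d => d - t.1 0) '' Set.range t.1 =
        insert 0 (Set.range fun i : Fin r => t.1 i.succ - t.1 0) := by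
      ext x
      constructor
      · rintro ⟨_, ⟨j, rfl⟩, rfl⟩
        rcases Fin.eq_zero_or_eq_succ j with rfl | ⟨i, rfl⟩
        · exact Or.inl (sub_self _)
        · exact Or.inr ⟨i, rfl⟩
      · rintro (rfl | ⟨i, rfl⟩)
        · exact ⟨t.1 0, ⟨0, rfl⟩, sub_self _⟩
        · exact ⟨t.1 i.succ, ⟨i.succ, rfl⟩, rfl⟩
    rw [himg, Submodule.span_insert_zero] at hspan
    exact linearIndependent_of_top_le_span_of_card_eq_finrank hspan.ge
      (by rw [Fintype.card_fin, finrank_V])⟩⟩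
  invFun xs := ⟨Fin.cases xs.1 (fun i => xs.1 + xs.2.1 i), by
    constructor
    · intro j k hjk
      rcases Fin.eq_zero_or_eq_succ j with rfl | ⟨i, rfl⟩ <;>
        rcases Fin.eq_zero_or_eq_succ k with rfl | ⟨i', rfl⟩
      · rfl
      · simp only [Fin.cases_zero, Fin.cases_succ] at hjk
        exact absurd (add_eq_left.mp hjk.symm) (xs.2.2.ne_zero i')
      · simp only [Fin.cases_zero, Fin.cases_succ] at hjk
        exact absurd (add_eq_left.mp hjk) (xs.2.2.ne_zero i)
      · simp only [Fin.cases_succ] at hjk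
        rw [xs.2.2.injective (add_left_cancel hjk)]
    · refine conn_of_span p (d₀ := xs.1) ⟨0, rfl⟩ ?_
      have himg : (fun d => d - xs.1) ''
          Set.range (Fin.cases xs.1 (fun i => xs.1 + xs.2.1 i) : Fin (r+1) → V) =
          insert 0 (Set.range xs.2.1) := by
        ext x
        constructor
        · rintro ⟨_, ⟨j, rfl⟩, rfl⟩
          rcases Fin.eq_zero_or_eq_succ j with rfl | ⟨i, rfl⟩
          · exact Or.inl (by simp)
          · exact Or.inr ⟨i, by simp⟩
        · rintro (rfl | ⟨i, rfl⟩)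
          · exact ⟨xs.1, ⟨0, rfl⟩, by simp⟩
          · exact ⟨xs.1 + xs.2.1 i, ⟨i.succ, by simp⟩, by simp⟩
      rw [himg, Submodule.span_insert_zero]
      exact xs.2.2.span_eq_top_of_card_eq_finrank' (by rw [Fintype.card_fin, finrank_V])⟩
  left_inv := by
    rintro ⟨t, ht⟩
    refine Subtype.ext (funext fun j => ?_)
    rcases Fin.eq_zero_or_eq_succ j with rfl | ⟨i, rfl⟩
    · simp
    · simp
  right_inv := by
    rintro ⟨x, s, hs⟩
    refine Prod.ext rfl (Subtype.ext (funext fun i => ?_))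
    simp

end TupleEquiv

/-- For `q = p^r` and `G = (ℤ_p)^r` acting diagonally on the edges of
`K_{q,q}` (shores indexed by `G`), the number of connected `G`-invariant subgraphs
of `K_{q,q}` that are unions of exactly `r+1` edge orbits equals
`q·(q-p⁰)(q-p¹)⋯(q-p^(r-1)) / (r+1)!`  (stated multiplied through by `(r+1)!`). -/
theorem stmt9 (p r : ℕ) [Fact p.Prime] (hr : 1 ≤ r) :
    (Nat.card {E : Set ((Fin r → ZMod p) × (Fin r → ZMod p)) //
        (∀ e ∈ E, ∀ g : Fin r → ZMod p, (g + e.1, g + e.2) ∈ E) ∧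
        Nat.card {O : Set ((Fin r → ZMod p) × (Fin r → ZMod p)) //
          ∃ e ∈ E, O = edgeOrbit e} = r + 1 ∧
        (bipGraph E).Connected}) * (r + 1).factorial =
      p ^ r * ∏ i ∈ Finset.range r, (p ^ r - p ^ i) := by
  classical
  set V := Fin r → ZMod p
  -- Step 1: pass to difference sets
  have e1 : {E : Set (V × V) //
        (∀ e ∈ E, ∀ g : V, (g + e.1, g + e.2) ∈ E) ∧
        Nat.card {O : Set (V × V) // ∃ e ∈ E, O = edgeOrbit e} = r + 1 ∧
        (bipGraph E).Connected} ≃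
      {D : Set V // Nat.card D = r + 1 ∧ (bipGraph (diffEdges D)).Connected} :=
    { toFun := fun E => ⟨diffSet E.1, by
        rw [← card_orbits E.1 E.2.1]; exact E.2.2.1, by
        rw [diffEdges_diffSet E.2.1]; exact E.2.2.2⟩
      invFun := fun D => ⟨diffEdges D.1, diffEdges_invariant D.1, by
        rw [card_orbits _ (diffEdges_invariant D.1), diffSet_diffEdges]; exact D.2.1, D.2.2⟩
      left_inv := fun E => Subtype.ext (diffEdges_diffSet E.2.1)
      right_inv := fun D => Subtype.ext (diffSet_diffEdges D.1) }
  rw [Nat.card_congr e1]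
  rw [card_sets_mul_factorial (fun D => (bipGraph (diffEdges D)).Connected) (r + 1)]
  rw [Nat.card_congr (tupleEquiv p r), Nat.card_prod]
  have h1 : Nat.card V = p ^ r := by
    rw [Nat.card_eq_fintype_card, Fintype.card_fun, ZMod.card, Fintype.card_fin]
  have h2 : Nat.card {s : Fin r → V // LinearIndependent (ZMod p) s} =
      ∏ i ∈ Finset.range r, (p ^ r - p ^ i) := by
    rw [card_linearIndependent (by rw [finrank_V])]
    rw [← Fin.prod_univ_eq_prod_range]
    congr 1
    ext i
    rw [ZMod.card, finrank_V]
  rw [h1, h2]
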